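/- Let R be a commutative ring, M an R-module, N a module over the polynomial ring R[X], and φ : PolynomialModule R M → N an R[X]-linear map. Let e be a natural number and β ∈ R[X] a monic polynomial of degree e+1 such that β • n = 0 for every n ∈ N. Assume that the map M^{e+1} → N sending (m_0,…,m_e) to φ(Σ_{i=0}^{e} m_i·X^i) is bijective. Then φ is surjective and its kernel equals {β • q : q ∈ PolynomialModule R M}; consequently φ induces an isomorphism of PolynomialModule R M modulo the submodule β • (PolynomialModule R M) onto N. -/

import Mathlib

open Polynomial

/-- Division lemma: any element of the polynomial module supported in degrees
`< n + (e+1)` can be written as `β • q' + (terms of degree ≤ e)`. -/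
private lemma div_aux {R M : Type*} [CommRing R] [AddCommGroup M] [Module R M]
    (e : ℕ) (β : R[X]) (hβmonic : β.Monic) (hβdeg : β.natDegree = e + 1) :
    ∀ (n : ℕ) (q : PolynomialModule R M), (∀ i, n + (e + 1) ≤ i → q.coeff i = 0) →
      ∃ (q' : PolynomialModule R M) (m : Fin (e + 1) → M),
        q = β • q' + ∑ i : Fin (e + 1), PolynomialModule.single R (i : ℕ) (m i) := by
  intro n
  induction n with
  | zero =>
    intro q hq
    refine ⟨0, fun i => q.coeff i, ?_⟩
    rw [smul_zero, zero_add]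
    apply PolynomialModule.ext
    apply Finsupp.ext
    intro j
    rw [PolynomialModule.coeff_sum, Finsupp.finset_sum_apply]
    simp only [PolynomialModule.coeff_single, Finsupp.single_apply]
    by_cases hj : j < e + 1
    · rw [Finset.sum_eq_single (⟨j, hj⟩ : Fin (e + 1))]
      · simp
      · intro b _ hb
        simp only [ite_eq_right_iff]
        intro hbj
        exact absurd (Fin.ext hbj) hb
      · simp
    · rw [hq j (by omega), Finset.sum_eq_zero]
      intro b _
      simp only [ite_eq_right_iff]
      intro hbj
      omega
  | succ n ih =>
    intro q hq
    set c : M := q.coeff (n + (e + 1)) with hc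
    set r : PolynomialModule R M :=
      q - β • PolynomialModule.single R n c with hr
    have hrsupp : ∀ i, n + (e + 1) ≤ i → r.coeff i = 0 := by
      intro i hi
      rw [hr, show (q - β • PolynomialModule.single R n c).coeff i =
        q.coeff i - (β • PolynomialModule.single R n c).coeff i from rfl, PolynomialModule.smul_single_apply,
        if_pos (by omega : n ≤ i)]
      rcases eq_or_lt_of_le hi with h | h
      · rw [← h]
        have h2 : n + (e + 1) - n = e + 1 := by omega
        have hcoeff : β.coeff (e + 1) = 1 := by
          rw [← hβdeg]; exact hβmonic.coeff_natDegree
        rw [h2, hcoeff, one_smul, hc, sub_self]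
      · rw [hq i (by omega), Polynomial.coeff_eq_zero_of_natDegree_lt
          (by omega : β.natDegree < i - n), zero_smul, sub_zero]
    obtain ⟨q', m, hm⟩ := ih r hrsupp
    refine ⟨q' + PolynomialModule.single R n c, m, ?_⟩
    have key : q = r + β • PolynomialModule.single R n c := by
      rw [hr]; abel
    rw [key, hm, smul_add]; abel

private lemma div_full {R M : Type*} [CommRing R] [AddCommGroup M] [Module R M]
    (e : ℕ) (β : R[X]) (hβmonic : β.Monic) (hβdeg : β.natDegree = e + 1)
    (q : PolynomialModule R M) :
    ∃ (q' : PolynomialModule R M) (m : Fin (e + 1) → M),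
      q = β • q' + ∑ i : Fin (e + 1), PolynomialModule.single R (i : ℕ) (m i) := by
  apply div_aux e β hβmonic hβdeg (q.coeff.support.sup id + 1)
  intro i hi
  apply Finsupp.notMem_support_iff.mp
  intro hmem
  have := Finset.le_sup (f := id) hmem
  simp only [id] at this
  omega

theorem stmt_1 {R M N : Type*} [CommRing R] [AddCommGroup M] [Module R M]
    [AddCommGroup N] [Module R[X] N]
    (φ : PolynomialModule R M →ₗ[R[X]] N)
    (e : ℕ) (β : R[X]) (hβmonic : β.Monic) (hβdeg : β.natDegree = e + 1)
    (hβ : ∀ n : N, β • n = 0)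
    (hbij : Function.Bijective
      (fun m : Fin (e + 1) → M =>
        φ (∑ i : Fin (e + 1), PolynomialModule.single R (i : ℕ) (m i)))) :
    Function.Surjective φ ∧
      LinearMap.ker φ =
        LinearMap.range (β • (LinearMap.id : PolynomialModule R M →ₗ[R[X]] PolynomialModule R M)) ∧
      ∃ ψ : (PolynomialModule R M ⧸
          LinearMap.range (β • (LinearMap.id : PolynomialModule R M →ₗ[R[X]] PolynomialModule R M)))
          ≃ₗ[R[X]] N,
        ∀ q : PolynomialModule R M, ψ (Submodule.Quotient.mk q) = φ q := by
  have hsurj : Function.Surjective φ := by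
    intro n
    obtain ⟨m, hm⟩ := hbij.surjective n
    exact ⟨_, hm⟩
  have hker : LinearMap.ker φ =
      LinearMap.range (β • (LinearMap.id : PolynomialModule R M →ₗ[R[X]] PolynomialModule R M)) := by
    ext q
    simp only [LinearMap.mem_ker, LinearMap.mem_range, LinearMap.smul_apply, LinearMap.id_apply]
    constructor
    · intro hq
      obtain ⟨q', m, hm⟩ := div_full e β hβmonic hβdeg q
      have h0 : φ (∑ i : Fin (e + 1), PolynomialModule.single R (i : ℕ) (m i)) = 0 := by
        have := hq
        rw [hm, map_add, map_smul, hβ] at this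
        rwa [zero_add] at this
      have hz : φ (∑ i : Fin (e + 1), PolynomialModule.single R (i : ℕ)
          ((0 : Fin (e + 1) → M) i)) = 0 := by
        simp
      have hm0 : m = 0 := hbij.injective (h0.trans hz.symm)
      refine ⟨q', ?_⟩
      rw [hm, hm0]
      simp
    · rintro ⟨y, rfl⟩
      rw [map_smul, hβ]
  refine ⟨hsurj, hker, ?_⟩
  set K := LinearMap.range (β • (LinearMap.id : PolynomialModule R M →ₗ[R[X]] PolynomialModule R M))
  have hle : K ≤ LinearMap.ker φ := hker.ge
  let ψ' := K.liftQ φ hle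
  have hψ'surj : Function.Surjective ψ' := by
    intro n
    obtain ⟨q, hq⟩ := hsurj n
    exact ⟨Submodule.Quotient.mk q, hq⟩
  have hψ'inj : Function.Injective ψ' := by
    rw [← LinearMap.ker_eq_bot]
    exact Submodule.ker_liftQ_eq_bot K φ hle hker.le
  exact ⟨LinearEquiv.ofBijective ψ' ⟨hψ'inj, hψ'surj⟩, fun q => rfl⟩
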